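/- Let q > p > 0, a ≥ 0, and s ≥ max{3, e^{2aq/(q−p)}}. Then ∫_s^∞ x^{−q/p} (log x)^{aq/p} dx ≤ 2 · (p/(q−p)) · (log s)^{aq/p} · s^{1 − q/p}. -/

import Mathlib

open Real MeasureTheory Filter Set Topology

/-- For `q > p > 0`, `a ≥ 0` and `s ≥ max{3, e^{2aq/(q−p)}}`,
`∫_s^∞ x^{−q/p} (log x)^{aq/p} dx ≤ 2 (p/(q−p)) (log s)^{aq/p} s^{1−q/p}`. -/
theorem stmt16 (p q a : ℝ) (hp : 0 < p) (hpq : p < q) (ha : 0 ≤ a)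
    (s : ℝ) (hs3 : 3 ≤ s) (hse : Real.exp (2 * a * q / (q - p)) ≤ s) :
    (∫ x in Set.Ioi s, x ^ (-(q / p)) * (Real.log x) ^ (a * q / p)) ≤
      2 * (p / (q - p)) * (Real.log s) ^ (a * q / p) * s ^ (1 - q / p) := by
  set c : ℝ := q / p with hc_def
  set r : ℝ := a * q / p with hr_def
  have hq : 0 < q := hp.trans hpq
  have hqp : 0 < q - p := by linarith
  have hc1 : 1 < c := (one_lt_div hp).2 hpq
  have hc0 : 0 < c - 1 := by linarith
  have hr0 : 0 ≤ r := by positivity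
  have hs0 : 0 < s := by linarith
  have hlogs1 : 1 < Real.log s := by
    calc (1:ℝ) < Real.log 3 := by
          rw [show (1:ℝ) = Real.log (Real.exp 1) by rw [Real.log_exp]]
          exact Real.log_lt_log (exp_pos 1) (by linarith [Real.exp_one_lt_d9])
      _ ≤ Real.log s := Real.log_le_log (by norm_num) hs3
  have hlogs : 2 * r ≤ (c - 1) * Real.log s := by
    have h1 : 2 * a * q / (q - p) ≤ Real.log s := by
      calc 2 * a * q / (q - p) = Real.log (Real.exp (2 * a * q / (q - p))) := (Real.log_exp _).symm
        _ ≤ Real.log s := Real.log_le_log (exp_pos _) hse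
    have h2 : (c - 1) * (2 * a * q / (q - p)) = 2 * r := by
      rw [hc_def, hr_def]; field_simp
    calc 2 * r = (c - 1) * (2 * a * q / (q - p)) := h2.symm
      _ ≤ (c - 1) * Real.log s := by
          apply mul_le_mul_of_nonneg_left h1 hc0.le
  -- key logarithmic bounds on Ioi s
  have hkey : ∀ x ∈ Ioi s, 2 * r ≤ (c - 1) * Real.log x ∧ 1 < Real.log x ∧ 0 < x := by
    intro x hx
    have hx0 : 0 < x := lt_trans hs0 hx
    have hlx : Real.log s ≤ Real.log x := Real.log_le_log hs0 (le_of_lt hx)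
    exact ⟨hlogs.trans (mul_le_mul_of_nonneg_left hlx hc0.le), lt_of_lt_of_le hlogs1 hlx, hx0⟩
  -- g and its derivative
  set g : ℝ → ℝ := fun x => -(x ^ (1 - c) * Real.log x ^ r) with hg_def
  set g' : ℝ → ℝ := fun x => x ^ (-c) * (Real.log x ^ (r - 1) * ((c - 1) * Real.log x - r))
    with hg'_def
  have hderiv : ∀ x ∈ Ici s, HasDerivAt g (g' x) x := by
    intro x hx
    have hx0 : 0 < x := lt_of_lt_of_le hs0 hx
    have hlx1 : 1 < Real.log x := lt_of_lt_of_le hlogs1 (Real.log_le_log hs0 hx)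
    have hlx0 : 0 < Real.log x := lt_trans one_pos hlx1
    have h1 : HasDerivAt (fun y : ℝ => y ^ (1 - c)) ((1 - c) * x ^ (1 - c - 1)) x :=
      Real.hasDerivAt_rpow_const (Or.inl hx0.ne')
    have h2 : HasDerivAt (fun y : ℝ => Real.log y ^ r)
        (r * Real.log x ^ (r - 1) * x⁻¹) x := by
      have := (Real.hasDerivAt_rpow_const (x := Real.log x) (p := r)
        (Or.inl hlx0.ne')).comp x (Real.hasDerivAt_log hx0.ne')
      exact this
    have h3 := ((h1.mul h2).neg)
    refine HasDerivAt.congr_deriv h3 (Eq.symm ?_)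
    have e1 : x ^ (1 - c - 1) = x ^ (-c) := by norm_num
    have e2 : x ^ (1 - c) * x⁻¹ = x ^ (-c) := by
      rw [show (1 - c) = -c + 1 by ring, Real.rpow_add_one hx0.ne', mul_assoc,
        mul_inv_cancel₀ hx0.ne', mul_one]
    have e3 : Real.log x ^ (r - 1) * Real.log x = Real.log x ^ r := by
      rw [← Real.rpow_add_one hlx0.ne']; norm_num
    rw [hg'_def]
    simp only
    rw [e1.symm]
    have : x ^ (1 - c - 1) * (Real.log x ^ (r - 1) * ((c - 1) * Real.log x - r))
        = -((1 - c) * x ^ (1 - c - 1) * Real.log x ^ r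
            + x ^ (1 - c) * (r * Real.log x ^ (r - 1) * x⁻¹)) := by
      rw [show x ^ (1 - c) * (r * Real.log x ^ (r - 1) * x⁻¹)
          = (x ^ (1 - c) * x⁻¹) * (r * Real.log x ^ (r - 1)) by ring, e2, ← e1, ← e3]
      ring
    rw [this]
  -- limit at infinity
  have htend : Tendsto g atTop (𝓝 0) := by
    have h0 : Tendsto (fun x : ℝ => Real.log x ^ r / x ^ (c - 1)) atTop (𝓝 0) :=
      (isLittleO_log_rpow_rpow_atTop r hc0).tendsto_div_nhds_zero
    have heq : (fun x : ℝ => -(Real.log x ^ r / x ^ (c - 1))) =ᶠ[atTop] g := by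
      filter_upwards [eventually_gt_atTop 0] with x hx
      rw [hg_def]
      simp only
      rw [show (1 - c) = -(c - 1) by ring, Real.rpow_neg hx.le]
      field_simp
    have := (h0.neg).congr' heq
    simpa using this
  have hg'nonneg : ∀ x ∈ Ioi s, 0 ≤ g' x := by
    intro x hx
    obtain ⟨h2r, hlx1, hx0⟩ := hkey x hx
    have hlx0 : 0 < Real.log x := lt_trans one_pos hlx1
    apply mul_nonneg (Real.rpow_nonneg hx0.le _)
    apply mul_nonneg (Real.rpow_nonneg hlx0.le _)
    nlinarith
  -- integral of g'
  have hint : ∫ x in Ioi s, g' x = 0 - g s :=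
    integral_Ioi_of_hasDerivAt_of_nonneg' hderiv hg'nonneg htend
  have hintable : IntegrableOn g' (Ioi s) :=
    integrableOn_Ioi_deriv_of_nonneg' hderiv hg'nonneg htend
  -- pointwise bound: f x ≤ (2/(c-1)) * g' x  on Ioi s
  have hbound : ∀ x ∈ Ioi s,
      x ^ (-(q / p)) * Real.log x ^ (a * q / p) ≤ 2 / (c - 1) * g' x := by
    intro x hx
    obtain ⟨h2r, hlx1, hx0⟩ := hkey x hx
    have hlx0 : 0 < Real.log x := lt_trans one_pos hlx1
    have e3 : Real.log x ^ r = Real.log x ^ (r - 1) * Real.log x := by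
      rw [← Real.rpow_add_one hlx0.ne']; norm_num
    rw [hg'_def]
    simp only
    rw [show -(q/p) = -c from rfl, show a * q / p = r from rfl, e3]
    have hxpow : 0 ≤ x ^ (-c) := Real.rpow_nonneg hx0.le _
    have hlpow : 0 ≤ Real.log x ^ (r - 1) := Real.rpow_nonneg hlx0.le _
    rw [show 2 / (c - 1) * (x ^ (-c) * (Real.log x ^ (r - 1) * ((c - 1) * Real.log x - r)))
        = x ^ (-c) * (Real.log x ^ (r - 1) * (2 / (c - 1) * ((c - 1) * Real.log x - r))) by ring]
    apply mul_le_mul_of_nonneg_left _ hxpow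
    apply mul_le_mul_of_nonneg_left _ hlpow
    rw [div_mul_eq_mul_div, le_div_iff₀ hc0]
    nlinarith
  -- the integrand is integrable
  have hmeas : AEStronglyMeasurable (fun x : ℝ => x ^ (-(q / p)) * Real.log x ^ (a * q / p))
      (volume.restrict (Ioi s)) := by
    apply ContinuousOn.aestronglyMeasurable _ measurableSet_Ioi
    intro x hx
    obtain ⟨h2r, hlx1, hx0⟩ := hkey x hx
    have hlx0 : 0 < Real.log x := lt_trans one_pos hlx1
    apply ContinuousAt.continuousWithinAt
    exact (Real.continuousAt_rpow_const x _ (Or.inl hx0.ne')).mul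
      ((Real.continuousAt_rpow_const (Real.log x) _ (Or.inl hlx0.ne')).comp
        (Real.continuousAt_log hx0.ne'))
  have hfint : IntegrableOn (fun x : ℝ => x ^ (-(q / p)) * Real.log x ^ (a * q / p)) (Ioi s) := by
    apply Integrable.mono' (hintable.const_mul (2 / (c - 1))) hmeas
    rw [ae_restrict_iff' measurableSet_Ioi]
    filter_upwards with x hx
    obtain ⟨h2r, hlx1, hx0⟩ := hkey x hx
    have hlx0 : 0 < Real.log x := lt_trans one_pos hlx1
    rw [Real.norm_eq_abs, abs_of_nonneg (by positivity)]
    exact hbound x hx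
  calc (∫ x in Set.Ioi s, x ^ (-(q / p)) * (Real.log x) ^ (a * q / p))
      ≤ ∫ x in Ioi s, 2 / (c - 1) * g' x :=
        setIntegral_mono_on hfint (hintable.const_mul _) measurableSet_Ioi hbound
    _ = 2 / (c - 1) * ∫ x in Ioi s, g' x := by rw [integral_const_mul]
    _ = 2 / (c - 1) * (s ^ (1 - c) * Real.log s ^ r) := by
        rw [hint]; simp [hg_def]
    _ = 2 * (p / (q - p)) * (Real.log s) ^ (a * q / p) * s ^ (1 - q / p) := by
        rw [show a * q / p = r from rfl, show 1 - q / p = 1 - c from rfl]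
        rw [show 2 / (c - 1) = 2 * (p / (q - p)) by rw [hc_def]; field_simp]
        ring
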